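/- The quiver Γ^{16}_{1,2,4} of coloured oriented single and paired diagonals of a regular 16-gon is isomorphic as a stable translation quiver to Z E_8/⟨τ^{-16}⟩; this quotient is the Auslander–Reiten quiver of the cluster category C_{E_8} = D^b(mod kE_8)/τ^{-1}Σ, on which the shift Σ acts as τ^{-15}. -/

import Mathlib

/-!
Coloured oriented single and paired diagonals in a regular polygon, following
L. Lamberti, "Combinatorial model for the cluster categories of type E".

The vertices of the regular `m`-gon `Π` are labelled by `ZMod m` (clockwise).
A coloured oriented diagonal `[i,j]_c` is encoded by the structure `Diag`;
the colour `P` encodes a *paired* diagonal `[i,j]_P = {[i,j]_R, [j,i]_B}`.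
-/

inductive Colour : Type
  | R : Colour
  | B : Colour
  | P : Colour
deriving DecidableEq

/-- A coloured oriented (single or paired) diagonal `[i,j]_c` of the regular
`m`-gon (for `m = 0` we interpret `ZMod 0 = ℤ` as the infinite-sided polygon). -/
structure Diag (m : ℕ) where
  i : ZMod m
  j : ZMod m
  c : Colour
deriving DecidableEq

/-- The simultaneous change of colour and orientation:
`ρ([i,j]_R) = [j,i]_B`, `ρ([i,j]_B) = [j,i]_R`, `ρ([i,j]_P) = [i,j]_P`. -/
def rho {m : ℕ} : Diag m → Diag m
  | ⟨i, j, Colour.R⟩ => ⟨j, i, Colour.B⟩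
  | ⟨i, j, Colour.B⟩ => ⟨j, i, Colour.R⟩
  | ⟨i, j, Colour.P⟩ => ⟨i, j, Colour.P⟩

/-- The anticlockwise rotation `[i,j]_c ↦ [i-1,j-1]_c`. -/
def shiftD {m : ℕ} (d : Diag m) : Diag m := ⟨d.i - 1, d.j - 1, d.c⟩

/-- The slice of `Π_{r,s,t}` based at the vertex `i` of `Π`:
the paired diagonals `[i,i+2]_P, …, [i,i+r+2]_P`, the red single diagonals
`[i,i+r+3]_R, …, [i,i+r+s+2]_R` and the blue single diagonals
`[i+r+3,i]_B, …, [i+r+t+2,i]_B`. -/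
def PiSetAt (r s t : ℕ) {m : ℕ} (i : ZMod m) : Set (Diag m) :=
  {d | (∃ k : ℕ, 2 ≤ k ∧ k ≤ r + 2 ∧ d = ⟨i, i + (k : ZMod m), Colour.P⟩) ∨
       (∃ k : ℕ, r + 3 ≤ k ∧ k ≤ r + s + 2 ∧ d = ⟨i, i + (k : ZMod m), Colour.R⟩) ∨
       (∃ k : ℕ, r + 3 ≤ k ∧ k ≤ r + t + 2 ∧ d = ⟨i + (k : ZMod m), i, Colour.B⟩)}

/-- The set `Π_{r,s,t}` of coloured oriented single and paired diagonals of the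
regular `m`-gon associated to the tree `T_{r,s,t}`. -/
def PiSet (r s t m : ℕ) : Set (Diag m) := ⋃ i : ZMod m, PiSetAt r s t i

open Classical in
/-- The translation `τ` on coloured oriented diagonals: the anticlockwise
rotation `[i,j]_c ↦ [i-1,j-1]_c`, composed with `ρ^{m}` on the first slice
`Π_{r,s,t}|_1` when the tree is symmetric (`s = t`). -/
noncomputable def tauD (r s t : ℕ) {m : ℕ} (d : Diag m) : Diag m :=
  if s = t ∧ d ∈ PiSetAt r s t (1 : ZMod m) then rho^[m] (shiftD d) else shiftD d

/-- Minimal clockwise rotations (before the colour adjustment at the seam):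
`[k,l]_c → [k,l+1]_c`, `[k,l]_c → [k+1,l]_c`, together with
`[k,k+r+2]_P → [k,k+r+3]_R`, `[k,k+r+2]_P → [k+r+3,k]_B`,
`[k,k+r+3]_R → [k+1,k+r+3]_P` and `[k+r+3,k]_B → [k+1,k+r+3]_P`. -/
def Rot (r : ℕ) {m : ℕ} (a b : Diag m) : Prop :=
  b = ⟨a.i, a.j + 1, a.c⟩ ∨ b = ⟨a.i + 1, a.j, a.c⟩ ∨
  (∃ k : ZMod m, a = ⟨k, k + ((r : ZMod m) + 2), Colour.P⟩ ∧
    (b = ⟨k, k + ((r : ZMod m) + 3), Colour.R⟩ ∨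
     b = ⟨k + ((r : ZMod m) + 3), k, Colour.B⟩)) ∨
  (∃ k : ZMod m,
    (a = ⟨k, k + ((r : ZMod m) + 3), Colour.R⟩ ∨
     a = ⟨k + ((r : ZMod m) + 3), k, Colour.B⟩) ∧
    b = ⟨k + 1, k + ((r : ZMod m) + 3), Colour.P⟩)

/-- In the symmetric case `s = t` with an odd-sided polygon, the arrows whose
source lies in `τ(Π_{r,t,t}|_1)` and whose (unadjusted) target lies in the
first slice `Π_{r,t,t}|_1` additionally change colour and orientation. -/
def SeamTwist (r s t m : ℕ) (a b₀ : Diag m) : Prop :=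
  s = t ∧ Odd m ∧ a ∈ (tauD r s t) '' (PiSetAt r s t (1 : ZMod m)) ∧
    b₀ ∈ PiSetAt r s t (1 : ZMod m)

/-- The arrows of the quiver `Γ^{m}_{r,s,t}`: minimal clockwise rotations
between elements of `Π_{r,s,t}`, adjusted by `ρ` at the seam. -/
def ArrowD (r s t m : ℕ) (a b : Diag m) : Prop :=
  a ∈ PiSet r s t m ∧ b ∈ PiSet r s t m ∧
    ∃ b₀, Rot r a b₀ ∧
      ((SeamTwist r s t m a b₀ ∧ b = rho b₀) ∨ (¬ SeamTwist r s t m a b₀ ∧ b = b₀))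

/-- The vertices of the tree `T_{r,s,t}`: a central vertex together with three
legs having `r`, `s`, `t` vertices respectively. -/
inductive TVert (r s t : ℕ) : Type
  | center : TVert r s t
  | legA : Fin r → TVert r s t
  | legB : Fin s → TVert r s t
  | legC : Fin t → TVert r s t
deriving DecidableEq

/-- An orientation of the tree `T_{r,s,t}`: the `A`-leg points towards the
centre, the `B`- and `C`-legs point away from it. -/
def TArrow {r s t : ℕ} (x y : TVert r s t) : Prop :=
  (∃ k l : Fin r, (l : ℕ) + 1 = (k : ℕ) ∧ x = TVert.legA k ∧ y = TVert.legA l) ∨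
  (∃ k : Fin r, (k : ℕ) = 0 ∧ x = TVert.legA k ∧ y = TVert.center) ∨
  (∃ k : Fin s, (k : ℕ) = 0 ∧ x = TVert.center ∧ y = TVert.legB k) ∨
  (∃ k l : Fin s, (k : ℕ) + 1 = (l : ℕ) ∧ x = TVert.legB k ∧ y = TVert.legB l) ∨
  (∃ k : Fin t, (k : ℕ) = 0 ∧ x = TVert.center ∧ y = TVert.legC k) ∨
  (∃ k l : Fin t, (k : ℕ) + 1 = (l : ℕ) ∧ x = TVert.legC k ∧ y = TVert.legC l)

/-- The order-two graph automorphism of a symmetric tree `T_{r,t,t}`,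
exchanging its two legs of length `t`. -/
def treeRho {r t : ℕ} : TVert r t t → TVert r t t
  | TVert.center => TVert.center
  | TVert.legA k => TVert.legA k
  | TVert.legB k => TVert.legC k
  | TVert.legC k => TVert.legB k

/-- `treeRho` as a permutation. -/
def treeRhoPerm (r t : ℕ) : Equiv.Perm (TVert r t t) :=
  Function.Involutive.toPerm treeRho (by intro x; cases x <;> rfl)

/-- The translation of the repetitive quiver `ℤQ`: `τ(m,i) = (m-1,i)`. -/
def ZTau {V : Type} (x : ℤ × V) : ℤ × V := (x.1 - 1, x.2)

/-- The arrows of the repetitive quiver `ℤQ` of a quiver with arrow relation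
`A`: for each arrow `i → j` of `Q` there are arrows `(m,i) → (m,j)` and
`(m,j) → (m+1,i)`. -/
def ZArrow {V : Type} (A : V → V → Prop) (x y : ℤ × V) : Prop :=
  (y.1 = x.1 ∧ A x.2 y.2) ∨ (y.1 = x.1 + 1 ∧ A y.2 x.2)

/-- The automorphism `τ^{-m} σ` of `ℤQ` given by shifting `m` steps to the
right and applying the graph automorphism `σ` of `Q`. -/
def shiftPerm {V : Type} (m : ℕ) (σ : Equiv.Perm V) : Equiv.Perm (ℤ × V) :=
  (Equiv.addRight (m : ℤ)).prodCongr σ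

/-- `φ` exhibits the quiver `Γ^{m}_{r,s,t}` (with vertex set `PiSet r s t m`,
arrow relation `ArrowD` and translation `tauD`) as the quotient of the
repetitive quiver `ℤQ` (with arrow relation `ZArrow A` and translation `ZTau`)
by the cyclic group generated by the automorphism `g`, as stable translation
quivers: `φ` is surjective onto the vertex set, its fibres are exactly the
`g`-orbits, it commutes with the translations, and the arrows of
`Γ^{m}_{r,s,t}` correspond exactly to the `g`-orbits of arrows of `ℤQ`. -/
def IsQuotientIso (r s t m : ℕ) {V : Type} (A : V → V → Prop)
    (g : Equiv.Perm (ℤ × V)) (φ : ℤ × V → Diag m) : Prop :=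
  (∀ x, φ x ∈ PiSet r s t m) ∧
  (∀ d ∈ PiSet r s t m, ∃ x, φ x = d) ∧
  (∀ x y, φ x = φ y ↔ ∃ k : ℤ, (g ^ k) x = y) ∧
  (∀ x, φ (ZTau x) = tauD r s t (φ x)) ∧
  (∀ x y, ArrowD r s t m (φ x) (φ y) ↔
    ∃ y', (∃ k : ℤ, (g ^ k) y = y') ∧ ZArrow A x y')


/-! ### Auxiliary material for the proof -/

def tvertEquiv (r s t : ℕ) : TVert r s t ≃ (Unit ⊕ Fin r ⊕ Fin s ⊕ Fin t) where
  toFun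
    | TVert.center => Sum.inl ()
    | TVert.legA k => Sum.inr (Sum.inl k)
    | TVert.legB k => Sum.inr (Sum.inr (Sum.inl k))
    | TVert.legC k => Sum.inr (Sum.inr (Sum.inr k))
  invFun
    | Sum.inl _ => TVert.center
    | Sum.inr (Sum.inl k) => TVert.legA k
    | Sum.inr (Sum.inr (Sum.inl k)) => TVert.legB k
    | Sum.inr (Sum.inr (Sum.inr k)) => TVert.legC k
  left_inv x := by cases x <;> rfl
  right_inv x := by rcases x with _ | (_ | (_ | _)) <;> rfl

instance (r s t : ℕ) : Fintype (TVert r s t) := Fintype.ofEquiv _ (tvertEquiv r s t).symm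

instance (a b : Diag 16) : Decidable (Rot 1 a b) := by unfold Rot; infer_instance
instance {r s t : ℕ} (v w : TVert r s t) : Decidable (TArrow v w) := by
  unfold TArrow; infer_instance

/-- The fundamental bijection `ZMod 16 × E₈ → Π_{1,2,4}`. -/
def psi : ZMod 16 × TVert 1 2 4 → Diag 16
  | (i, TVert.center) => ⟨i, i + 3, Colour.P⟩
  | (i, TVert.legA _) => ⟨i, i + 2, Colour.P⟩
  | (i, TVert.legB k) => ⟨i, i + 4 + ((k : ℕ) : ZMod 16), Colour.R⟩
  | (i, TVert.legC k) => ⟨i + 4 + ((k : ℕ) : ZMod 16), i, Colour.B⟩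

set_option maxRecDepth 100000 in
set_option maxHeartbeats 1000000 in
lemma psi_inj : ∀ u w : ZMod 16 × TVert 1 2 4, psi u = psi w → u = w := by decide

/-- Rotation of a diagonal by `c`. -/
def shiftBy {m : ℕ} (c : ZMod m) (d : Diag m) : Diag m := ⟨d.i + c, d.j + c, d.c⟩

lemma shiftBy_shiftBy {m : ℕ} (c c' : ZMod m) (d : Diag m) :
    shiftBy c (shiftBy c' d) = shiftBy (c' + c) d := by
  simp [shiftBy, add_assoc]

lemma rot_shift {m : ℕ} (c : ZMod m) (a b : Diag m) (h : Rot 1 a b) :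
    Rot 1 (shiftBy c a) (shiftBy c b) := by
  unfold Rot at h ⊢
  rcases h with h | h | ⟨k, ha, hb | hb⟩ | ⟨k, ha | ha, hb⟩
  · subst h; left; simp [shiftBy]; ring
  · subst h; right; left; simp [shiftBy]; ring
  · subst ha; subst hb
    refine Or.inr (Or.inr (Or.inl ⟨k + c, ?_, Or.inl ?_⟩)) <;> simp only [shiftBy, Diag.mk.injEq] <;> grind
  · subst ha; subst hb
    refine Or.inr (Or.inr (Or.inl ⟨k + c, ?_, Or.inr ?_⟩)) <;> simp only [shiftBy, Diag.mk.injEq] <;> grind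
  · subst ha; subst hb
    refine Or.inr (Or.inr (Or.inr ⟨k + c, Or.inl ?_, ?_⟩)) <;> simp only [shiftBy, Diag.mk.injEq] <;> grind
  · subst ha; subst hb
    refine Or.inr (Or.inr (Or.inr ⟨k + c, Or.inr ?_, ?_⟩)) <;> simp only [shiftBy, Diag.mk.injEq] <;> grind

lemma rot_shift_iff {m : ℕ} (c : ZMod m) (a b : Diag m) :
    Rot 1 (shiftBy c a) (shiftBy c b) ↔ Rot 1 a b := by
  constructor
  · intro h
    have := rot_shift (-c) _ _ h
    simpa [shiftBy_shiftBy, shiftBy] using this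
  · exact rot_shift c a b

lemma psi_shift (i : ZMod 16) (v : TVert 1 2 4) : psi (i, v) = shiftBy i (psi (0, v)) := by
  cases v <;> simp [psi, shiftBy] <;> ring_nf

set_option maxRecDepth 100000 in
set_option maxHeartbeats 1000000 in
lemma rot_iff0 : ∀ (j : ZMod 16) (v w : TVert 1 2 4),
    Rot 1 (psi (0, v)) (psi (j, w)) ↔
      ((j = 0 ∧ TArrow v w) ∨ (j = 1 ∧ TArrow w v)) := by decide

lemma rot_iff (i i' : ZMod 16) (v w : TVert 1 2 4) :
    Rot 1 (psi (i, v)) (psi (i', w)) ↔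
      ((i' = i ∧ TArrow v w) ∨ (i' = i + 1 ∧ TArrow w v)) := by
  have h1 : psi (i, v) = shiftBy i (psi (0, v)) := psi_shift _ _
  have h2 : psi (i', w) = shiftBy i (psi (i' - i, w)) := by
    rw [psi_shift i' w, psi_shift (i' - i) w, shiftBy_shiftBy]; ring_nf
  rw [h1, h2, rot_shift_iff, rot_iff0]
  constructor
  · rintro (⟨h, ht⟩ | ⟨h, ht⟩)
    · exact Or.inl ⟨by rw [sub_eq_zero] at h; exact h, ht⟩
    · exact Or.inr ⟨by rw [sub_eq_iff_eq_add] at h; rw [h]; ring, ht⟩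
  · rintro (⟨h, ht⟩ | ⟨h, ht⟩)
    · exact Or.inl ⟨by rw [h]; ring, ht⟩
    · exact Or.inr ⟨by rw [h]; ring, ht⟩

lemma psi_mem (i : ZMod 16) (v : TVert 1 2 4) : psi (i, v) ∈ PiSetAt 1 2 4 i := by
  cases v with
  | center => exact Or.inl ⟨3, by norm_num, by norm_num, by simp [psi]⟩
  | legA k => exact Or.inl ⟨2, by norm_num, by norm_num, by simp [psi]⟩
  | legB k =>
      refine Or.inr (Or.inl ⟨4 + (k : ℕ), by norm_num, by omega, ?_⟩)
      simp [psi]; push_cast; ring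
  | legC k =>
      refine Or.inr (Or.inr ⟨4 + (k : ℕ), by norm_num, by omega, ?_⟩)
      simp [psi]; push_cast; ring

lemma psi_mem' (u : ZMod 16 × TVert 1 2 4) : psi u ∈ PiSet 1 2 4 16 :=
  Set.mem_iUnion.mpr ⟨u.1, psi_mem u.1 u.2⟩

lemma not_seamTwist (a b : Diag 16) : ¬ SeamTwist 1 2 4 16 a b := by
  rintro ⟨h, -⟩; norm_num at h

lemma arrowD_iff (u w : ZMod 16 × TVert 1 2 4) :
    ArrowD 1 2 4 16 (psi u) (psi w) ↔ Rot 1 (psi u) (psi w) := by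
  constructor
  · rintro ⟨-, -, b₀, hrot, ⟨hst, -⟩ | ⟨-, rfl⟩⟩
    · exact absurd hst (not_seamTwist _ _)
    · exact hrot
  · intro h
    exact ⟨psi_mem' u, psi_mem' w, psi u |> fun _ => ⟨psi w, h,
      Or.inr ⟨not_seamTwist _ _, rfl⟩⟩⟩

lemma intCast_eq_intCast_iff16 (a b : ℤ) :
    ((a : ZMod 16) = (b : ZMod 16)) ↔ ∃ k : ℤ, a + 16 * k = b := by
  constructor
  · intro h
    have h2 : a ≡ b [ZMOD (16 : ℕ)] := (ZMod.intCast_eq_intCast_iff a b 16).mp h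
    have hd : (16 : ℤ) ∣ b - a := by exact_mod_cast Int.ModEq.dvd h2
    obtain ⟨k, hk⟩ := hd
    exact ⟨k, by linarith⟩
  · rintro ⟨k, rfl⟩
    push_cast
    have h16 : (16 : ZMod 16) = 0 := by decide
    rw [h16]
    ring

lemma g_apply (x : ℤ × TVert 1 2 4) :
    shiftPerm 16 (1 : Equiv.Perm (TVert 1 2 4)) x = (x.1 + 16, x.2) := by
  cases x; rfl

lemma g_inv_apply (x : ℤ × TVert 1 2 4) :
    (shiftPerm 16 (1 : Equiv.Perm (TVert 1 2 4)))⁻¹ x = (x.1 - 16, x.2) := by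
  rw [Equiv.Perm.inv_def, Equiv.symm_apply_eq, g_apply]
  simp

lemma g_zpow (k : ℤ) (x : ℤ × TVert 1 2 4) :
    ((shiftPerm 16 (1 : Equiv.Perm (TVert 1 2 4))) ^ k) x = (x.1 + 16 * k, x.2) := by
  induction k using Int.induction_on generalizing x with
  | zero => simp
  | succ n ih =>
      rw [zpow_add_one, Equiv.Perm.mul_apply, g_apply, ih]
      simp; ring
  | pred n ih =>
      rw [zpow_sub_one, Equiv.Perm.mul_apply, g_inv_apply, ih]
      simp; ring

/-- The quotient map. -/
noncomputable def phiE8 (x : ℤ × TVert 1 2 4) : Diag 16 := psi ((x.1 : ZMod 16), x.2)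

lemma h16 : (16 : ZMod 16) = 0 := by decide

lemma cast_add16 (n k : ℤ) : ((n + 16 * k : ℤ) : ZMod 16) = (n : ZMod 16) := by
  push_cast
  rw [h16]
  ring

lemma coe_val (i : ZMod 16) : (((i.val : ℕ) : ℤ) : ZMod 16) = i := by
  push_cast
  simp [ZMod.natCast_val]

lemma psi_sub_one (i : ZMod 16) (v : TVert 1 2 4) :
    psi (i - 1, v) = shiftD (psi (i, v)) := by
  cases v <;> simp only [psi, shiftD, Diag.mk.injEq] <;> grind

/-- Theorem 4.2 for `E₈`. The quiver `Γ^{16}_{1,2,4}` of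
coloured oriented single and paired diagonals of a regular 16-gon is
isomorphic, as a stable translation quiver, to `ℤ E₈ / ⟨τ^{-16}⟩`, where
`E₈ = T_{1,2,4}`.  (This quotient is the AR-quiver of the cluster category
`C_{E₈} = D^b(mod k E₈)/τ^{-1}Σ`, on which `Σ` acts as `τ^{-15}`.) -/
theorem gamma_16gon_iso_ZE8_quotient :
    ∃ φ : ℤ × TVert 1 2 4 → Diag 16,
      IsQuotientIso 1 2 4 16 TArrow
        (shiftPerm 16 (1 : Equiv.Perm (TVert 1 2 4))) φ := by
  refine ⟨phiE8, fun x => psi_mem' _, ?_, ?_, ?_, ?_⟩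
  · -- surjectivity
    intro d hd
    rw [PiSet, Set.mem_iUnion] at hd
    obtain ⟨i, hi⟩ := hd
    rcases hi with ⟨k, hk1, hk2, rfl⟩ | ⟨k, hk1, hk2, rfl⟩ | ⟨k, hk1, hk2, rfl⟩
    · interval_cases k
      · exact ⟨((i.val : ℤ), TVert.legA 0), by
          simp [phiE8, psi, coe_val]; try ring⟩
      · exact ⟨((i.val : ℤ), TVert.center), by
          simp [phiE8, psi, coe_val]; try ring⟩
    · interval_cases k
      · exact ⟨((i.val : ℤ), TVert.legB 0), by
          simp [phiE8, psi, coe_val]; try ring⟩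
      · exact ⟨((i.val : ℤ), TVert.legB ⟨1, by norm_num⟩), by
          simp [phiE8, psi, coe_val]; try ring⟩
    · interval_cases k
      · exact ⟨((i.val : ℤ), TVert.legC 0), by
          simp [phiE8, psi, coe_val]; try ring⟩
      · exact ⟨((i.val : ℤ), TVert.legC ⟨1, by norm_num⟩), by
          simp [phiE8, psi, coe_val]; try ring⟩
      · exact ⟨((i.val : ℤ), TVert.legC ⟨2, by norm_num⟩), by
          simp [phiE8, psi, coe_val]; try ring⟩
      · exact ⟨((i.val : ℤ), TVert.legC ⟨3, by norm_num⟩), by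
          simp [phiE8, psi, coe_val]; try ring⟩
  · -- fibres are orbits
    intro x y
    constructor
    · intro h
      have h2 := psi_inj _ _ h
      simp only [Prod.mk.injEq] at h2
      obtain ⟨hfst, hsnd⟩ := h2
      obtain ⟨k, hk⟩ := (intCast_eq_intCast_iff16 x.1 y.1).mp hfst
      exact ⟨k, by rw [g_zpow]; exact Prod.ext hk hsnd⟩
    · rintro ⟨k, hk⟩
      rw [g_zpow] at hk
      rw [← hk]
      show psi _ = psi _
      rw [cast_add16]
  · -- commutes with translations
    intro x
    have hne : tauD 1 2 4 (phiE8 x) = shiftD (phiE8 x) := by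
      rw [tauD, if_neg]
      rintro ⟨h, -⟩
      norm_num at h
    rw [hne]
    show psi (((x.1 - 1 : ℤ) : ZMod 16), x.2) = _
    have : ((x.1 - 1 : ℤ) : ZMod 16) = ((x.1 : ZMod 16)) - 1 := by push_cast; ring
    rw [this, psi_sub_one]
    rfl
  · -- arrows
    intro x y
    show ArrowD 1 2 4 16 (psi ((x.1 : ZMod 16), x.2)) (psi ((y.1 : ZMod 16), y.2)) ↔ _
    rw [arrowD_iff, rot_iff]
    constructor
    · rintro (⟨h, ht⟩ | ⟨h, ht⟩)
      · obtain ⟨k, hk⟩ := (intCast_eq_intCast_iff16 y.1 x.1).mp h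
        exact ⟨(y.1 + 16 * k, y.2), ⟨k, by rw [g_zpow]⟩, Or.inl ⟨hk, ht⟩⟩
      · have h' : ((y.1 : ZMod 16)) = ((x.1 + 1 : ℤ) : ZMod 16) := by push_cast; rw [h]
        obtain ⟨k, hk⟩ := (intCast_eq_intCast_iff16 y.1 (x.1 + 1)).mp h'
        exact ⟨(y.1 + 16 * k, y.2), ⟨k, by rw [g_zpow]⟩, Or.inr ⟨hk, ht⟩⟩
    · rintro ⟨y', ⟨k, hk⟩, hz⟩
      rw [g_zpow] at hk
      subst hk
      rcases hz with ⟨h1, ht⟩ | ⟨h1, ht⟩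
      · refine Or.inl ⟨?_, ht⟩
        have := (intCast_eq_intCast_iff16 y.1 x.1).mpr ⟨k, h1⟩
        exact this
      · refine Or.inr ⟨?_, ht⟩
        have := (intCast_eq_intCast_iff16 y.1 (x.1 + 1)).mpr ⟨k, h1⟩
        rw [this]; push_cast; ring
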